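/- Every subgroup G of GL_n(ℂ) of finite exponent is finite (Burnside). -/

import Mathlib

open Polynomial Matrix

lemma aux_root_pow_eq_one {n m : ℕ} {u : Matrix (Fin n) (Fin n) ℂ}
    (hu : u ^ m = 1) {μ : ℂ} (hμ : μ ∈ u.charpoly.roots) : μ ^ m = 1 := by
  classical
  have hroot : u.charpoly.IsRoot μ := (mem_roots (u.charpoly_monic.ne_zero)).1 hμ
  have hmap : (charmatrix u).map (eval μ) = μ • (1 : Matrix (Fin n) (Fin n) ℂ) - u := by
    ext i j
    by_cases h : i = j
    · subst h
      simp [charmatrix_apply_eq, Matrix.smul_apply, Matrix.one_apply]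
    · simp [charmatrix_apply_ne _ _ _ h, Matrix.smul_apply, Matrix.one_apply_ne h]
  have hdet : (μ • (1 : Matrix (Fin n) (Fin n) ℂ) - u).det = 0 := by
    have h1 := RingHom.map_det (evalRingHom μ) (charmatrix u)
    rw [RingHom.mapMatrix_apply] at h1
    have h2 : (charmatrix u).map (⇑(evalRingHom μ)) = μ • 1 - u := hmap
    rw [h2] at h1
    have h3 : (evalRingHom μ) (charmatrix u).det = eval μ u.charpoly := rfl
    rw [h3, hroot.eq_zero] at h1
    exact h1.symm
  obtain ⟨v, hv0, hv⟩ := Matrix.exists_mulVec_eq_zero_iff.2 hdet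
  have huv : u *ᵥ v = μ • v := by
    have h : μ • v - u *ᵥ v = 0 := by
      have he : (μ • (1 : Matrix (Fin n) (Fin n) ℂ) - u) *ᵥ v = μ • v - u *ᵥ v := by
        rw [Matrix.sub_mulVec, Matrix.smul_mulVec, Matrix.one_mulVec]
      rw [← he, hv]
    exact (sub_eq_zero.1 h).symm
  have key : ∀ k, (u ^ k) *ᵥ v = μ ^ k • v := by
    intro k
    induction k with
    | zero => simp
    | succ k ih =>
      rw [pow_succ, ← Matrix.mulVec_mulVec, huv, Matrix.mulVec_smul, ih, smul_smul, pow_succ,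
        mul_comm]
  have hmv := key m
  rw [hu, Matrix.one_mulVec] at hmv
  obtain ⟨i, hi⟩ := Function.ne_iff.1 hv0
  have : v i = μ ^ m * v i := by
    conv_lhs => rw [hmv]
    simp
  have h4 : μ ^ m * v i = 1 * v i := by rw [one_mul]; exact this.symm
  exact mul_right_cancel₀ hi h4

lemma aux_eq_one {n m : ℕ} (hm : 1 ≤ m) {u : Matrix (Fin n) (Fin n) ℂ}
    (hu : u ^ m = 1) (htr : u.trace = n) : u = 1 := by
  have hm0 : m ≠ 0 := Nat.one_le_iff_ne_zero.mp hm
  rcases Nat.eq_zero_or_pos n with h0 | hpos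
  · subst h0
    apply Subsingleton.elim
  have : NeZero n := ⟨hpos.ne'⟩
  have hne : Nonempty (Fin n) := ⟨⟨0, hpos⟩⟩
  have hsplits : u.charpoly.Splits := IsAlgClosed.splits _
  have hcard : u.charpoly.roots.card = n := by
    rw [splits_iff_card_roots.1 hsplits, charpoly_natDegree_eq_dim, Fintype.card_fin]
  have habs : ∀ μ ∈ u.charpoly.roots, ‖μ‖ = 1 := by
    intro μ hμ
    have h1 : μ ^ m = 1 := aux_root_pow_eq_one hu hμ
    have h2 : ‖μ‖ ^ m = 1 := by
      rw [← norm_pow, h1, norm_one]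
    have h0 : 0 ≤ ‖μ‖ := norm_nonneg μ
    rcases lt_trichotomy (‖μ‖) 1 with h | h | h
    · have := pow_lt_one₀ h0 h hm0
      rw [h2] at this; exact absurd this (lt_irrefl 1)
    · exact h
    · have := one_lt_pow₀ h hm0
      rw [h2] at this; exact absurd this (lt_irrefl 1)
  have hsum : u.charpoly.roots.sum = (n : ℂ) := by
    rw [← trace_eq_sum_roots_charpoly, htr]
  have hall : ∀ μ ∈ u.charpoly.roots, μ = 1 := by
    by_contra hcon
    push_neg at hcon
    obtain ⟨μ₀, hμ₀, hμ₀ne⟩ := hcon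
    have hre : ∀ μ ∈ u.charpoly.roots, μ.re ≤ 1 := fun μ hμ =>
      (Complex.re_le_norm μ).trans (le_of_eq (habs μ hμ))
    have hre0 : μ₀.re < 1 := by
      rcases lt_or_eq_of_le (hre μ₀ hμ₀) with h | h
      · exact h
      · exfalso
        apply hμ₀ne
        have habs0 := habs μ₀ hμ₀
        have hns : Complex.normSq μ₀ = 1 := by
          rw [← Complex.sq_norm, habs0, one_pow]
        rw [Complex.normSq_apply, h] at hns
        have him : μ₀.im = 0 := by nlinarith [sq_nonneg μ₀.im]
        exact Complex.ext h him
    have hlt : (u.charpoly.roots.map Complex.re).sum <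
        (u.charpoly.roots.map (fun _ => (1 : ℝ))).sum := by
      apply Multiset.sum_lt_sum
      · exact hre
      · exact ⟨μ₀, hμ₀, hre0⟩
    have h1 : (u.charpoly.roots.map (fun _ => (1 : ℝ))).sum = n := by
      rw [Multiset.map_const', Multiset.sum_replicate, hcard]
      simp
    have h2 : (u.charpoly.roots.map Complex.re).sum = n := by
      have h3 := map_multiset_sum Complex.reAddGroupHom u.charpoly.roots
      rw [hsum] at h3
      have h4 : Complex.reAddGroupHom (n : ℂ) = (n : ℝ) := by
        simp [Complex.reAddGroupHom]
      rw [h4] at h3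
      have h5 : Multiset.map Complex.re u.charpoly.roots
          = Multiset.map (⇑Complex.reAddGroupHom) u.charpoly.roots := rfl
      rw [h5, ← h3]
    rw [h1, h2] at hlt
    exact absurd hlt (lt_irrefl _)
  have hcp : u.charpoly = (X - C 1) ^ n := by
    have he := hsplits.eq_prod_roots_of_monic u.charpoly_monic
    have hrepl : u.charpoly.roots = Multiset.replicate n (1 : ℂ) :=
      Multiset.eq_replicate.2 ⟨hcard, hall⟩
    rw [he, hrepl, Multiset.map_replicate, Multiset.prod_replicate]
  have haev : (aeval u) (X ^ m - 1 : ℂ[X]) = 0 := by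
    rw [map_sub, map_pow, aeval_X, _root_.map_one, hu, sub_self]
  have hint : IsIntegral ℂ u := ⟨X ^ m - 1, by
    simpa using monic_X_pow_sub_C (1 : ℂ) hm0, haev⟩
  have h1 : minpoly ℂ u ∣ (X - C 1) ^ n := hcp ▸ u.minpoly_dvd_charpoly
  have h2 : minpoly ℂ u ∣ X ^ m - 1 := minpoly.dvd ℂ u haev
  obtain ⟨k, hk, hassoc⟩ := (dvd_prime_pow (prime_X_sub_C (1 : ℂ)) n).1 h1
  have hsf : Squarefree (X ^ m - 1 : ℂ[X]) := by
    refine (X_pow_sub_one_separable_iff.2 ?_).squarefree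
    exact_mod_cast Nat.cast_ne_zero.2 hm0
  have hkle : k ≤ 1 := by
    by_contra hcon
    push_neg at hcon
    have hdvd : (X - C 1) * (X - C 1) ∣ minpoly ℂ u := by
      have hp : (X - C (1 : ℂ)) ^ 2 ∣ (X - C 1) ^ k := pow_dvd_pow _ hcon
      rw [pow_two] at hp
      exact hp.trans hassoc.symm.dvd
    exact Polynomial.not_isUnit_X_sub_C 1 (hsf _ (hdvd.trans h2))
  have hk0 : k ≠ 0 := by
    intro h
    subst h
    have : IsUnit (minpoly ℂ u) := by
      rw [hassoc.isUnit_iff]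
      simp
    exact (Polynomial.not_isUnit_of_natDegree_pos _ (minpoly.natDegree_pos hint)) this
  have hk1 : k = 1 := by omega
  subst hk1
  rw [pow_one] at hassoc
  have heq : minpoly ℂ u = X - C 1 :=
    Polynomial.eq_of_monic_of_associated (minpoly.monic hint) (monic_X_sub_C 1) hassoc
  have := minpoly.aeval ℂ u
  rw [heq, map_sub, aeval_X, aeval_C, _root_.map_one] at this
  exact sub_eq_zero.1 this

lemma aux_traces_finite (n m : ℕ) (hm : m ≠ 0) :
    Set.Finite {z : ℂ | ∃ u : Matrix (Fin n) (Fin n) ℂ, u ^ m = 1 ∧ u.trace = z} := by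
  classical
  have hpne : (X ^ m - 1 : ℂ[X]) ≠ 0 := by
    have := monic_X_pow_sub_C (1 : ℂ) hm
    simpa using this.ne_zero
  set S : Finset ℂ := (X ^ m - 1 : ℂ[X]).roots.toFinset with hS
  set F : Finset ℂ := (((n • S.val).powersetCard n).map Multiset.sum).toFinset with hF
  apply Set.Finite.subset F.finite_toSet
  rintro z ⟨u, hu, rfl⟩
  have hsplits : u.charpoly.Splits := IsAlgClosed.splits _
  have hcard : u.charpoly.roots.card = n := by
    rw [splits_iff_card_roots.1 hsplits, charpoly_natDegree_eq_dim, Fintype.card_fin]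
  have hsub : u.charpoly.roots ≤ n • S.val := by
    rw [Multiset.le_iff_count]
    intro x
    by_cases hx : x ∈ u.charpoly.roots
    · have hx1 : x ^ m = 1 := aux_root_pow_eq_one hu hx
      have hxS : x ∈ S := by
        rw [hS, Multiset.mem_toFinset, mem_roots hpne, IsRoot, eval_sub, eval_pow, eval_X,
          eval_one, hx1, sub_self]
      have hcount1 : S.val.count x = 1 :=
        Multiset.count_eq_one_of_mem S.nodup (Finset.mem_def.1 hxS)
      rw [Multiset.count_nsmul, hcount1, mul_one]
      exact (Multiset.count_le_card x _).trans (le_of_eq hcard)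
    · rw [Multiset.count_eq_zero_of_notMem hx]
      exact Nat.zero_le _
  have hmem : u.charpoly.roots ∈ (n • S.val).powersetCard n :=
    (Multiset.mem_powersetCard).2 ⟨hsub, hcard⟩
  have : u.trace = u.charpoly.roots.sum := trace_eq_sum_roots_charpoly u
  rw [hF]
  simp only [Finset.coe_sort_coe, Finset.mem_coe, Multiset.mem_toFinset, Multiset.mem_map]
  exact ⟨u.charpoly.roots, hmem, this.symm⟩

/-- Burnside: a linear group of finite exponent is finite. -/
theorem burnside_bounded_exponent (n : ℕ) (G : Subgroup (GL (Fin n) ℂ))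
    (hexp : ∃ m : ℕ, 1 ≤ m ∧ ∀ g ∈ G, g ^ m = 1) : Finite G := by
  classical
  obtain ⟨m, hm, hpow⟩ := hexp
  have hm0 : m ≠ 0 := Nat.one_le_iff_ne_zero.mp hm
  set ι : GL (Fin n) ℂ → Matrix (Fin n) (Fin n) ℂ := fun g => (g : Matrix (Fin n) (Fin n) ℂ)
    with hι
  set T : Set ℂ := {z : ℂ | ∃ u : Matrix (Fin n) (Fin n) ℂ, u ^ m = 1 ∧ u.trace = z} with hT
  have hTfin : T.Finite := aux_traces_finite n m hm0
  obtain ⟨b, hbsub, hbspan, hbind⟩ :=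
    exists_linearIndependent ℂ (ι '' (G : Set (GL (Fin n) ℂ)))
  have hbfin : Finite b := hbind.finite
  have hTf : Finite T := hTfin
  -- the map
  have hmemT : ∀ g ∈ G, ∀ g' ∈ G, (ι g * ι g').trace ∈ T := by
    intro g hg g' hg'
    refine ⟨ι g * ι g', ?_, rfl⟩
    have : ι g * ι g' = ι (g * g') := by simp [hι]
    rw [this, hι]
    have h1 : (g * g') ^ m = 1 := hpow _ (G.mul_mem hg hg')
    calc ((g * g' : GL (Fin n) ℂ) : Matrix (Fin n) (Fin n) ℂ) ^ m
        = (((g * g') ^ m : GL (Fin n) ℂ) : Matrix (Fin n) (Fin n) ℂ) := by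
          rw [Units.val_pow_eq_pow_val]
      _ = 1 := by rw [h1]; rfl
  have hxG : ∀ x : b, ∃ g' ∈ G, ι g' = (x : Matrix (Fin n) (Fin n) ℂ) := by
    intro x
    obtain ⟨g', hg', he⟩ := hbsub x.2
    exact ⟨g', hg', he⟩
  choose gb hgbG hgbe using hxG
  let Φ : G → (b → T) := fun g x =>
    ⟨(ι g * (x : Matrix (Fin n) (Fin n) ℂ)).trace, by
      rw [← hgbe x]
      exact hmemT g g.2 (gb x) (hgbG x)⟩
  have hinj : Function.Injective Φ := by
    intro g h hgh
    have hzero : ∀ x ∈ b, ((ι g - ι h) * x).trace = 0 := by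
      intro x hx
      have := congrFun hgh ⟨x, hx⟩
      have h2 : (ι g * x).trace = (ι h * x).trace := congrArg Subtype.val this
      rw [sub_mul, trace_sub, h2, sub_self]
    -- linear functional vanishing on span
    set L : Matrix (Fin n) (Fin n) ℂ →ₗ[ℂ] ℂ :=
      (Matrix.traceLinearMap (Fin n) ℂ ℂ).comp (LinearMap.mulLeft ℂ (ι g - ι h)) with hL
    have hLb : ∀ x ∈ b, L x = 0 := hzero
    have hLspan : ∀ x ∈ Submodule.span ℂ b, L x = 0 := by
      intro x hx
      have : Submodule.span ℂ b ≤ LinearMap.ker L := Submodule.span_le.2 fun y hy =>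
        LinearMap.mem_ker.2 (hLb y hy)
      exact LinearMap.mem_ker.1 (this hx)
    have hhinv : ι ((h : GL (Fin n) ℂ)⁻¹) ∈ Submodule.span ℂ b := by
      rw [hbspan]
      exact Submodule.subset_span ⟨(h : GL (Fin n) ℂ)⁻¹, G.inv_mem h.2, rfl⟩
    have hkey := hLspan _ hhinv
    rw [hL] at hkey
    simp only [LinearMap.comp_apply, LinearMap.mulLeft_apply, traceLinearMap_apply] at hkey
    rw [sub_mul, trace_sub, sub_eq_zero] at hkey
    have hh1 : ι (h : GL (Fin n) ℂ) * ι ((h : GL (Fin n) ℂ)⁻¹) = 1 := by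
      rw [hι]
      rw [← Units.val_mul]
      simp
    rw [hh1, trace_one, Fintype.card_fin] at hkey
    -- now u := g * h⁻¹
    set w : GL (Fin n) ℂ := (g : GL (Fin n) ℂ) * (h : GL (Fin n) ℂ)⁻¹ with hw
    have hwG : w ∈ G := G.mul_mem g.2 (G.inv_mem h.2)
    have hwm : (ι w) ^ m = 1 := by
      have h1 : w ^ m = 1 := hpow _ hwG
      calc (ι w) ^ m = ((w ^ m : GL (Fin n) ℂ) : Matrix (Fin n) (Fin n) ℂ) := by
            rw [hι]; rw [Units.val_pow_eq_pow_val]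
        _ = 1 := by rw [h1]; rfl
    have hwtr : (ι w).trace = (n : ℂ) := by
      have : ι w = ι (g : GL (Fin n) ℂ) * ι ((h : GL (Fin n) ℂ)⁻¹) := by simp [hι, hw]
      rw [this, hkey]
    have hw1 : ι w = 1 := aux_eq_one hm hwm hwtr
    have : w = 1 := Units.ext hw1
    have : (g : GL (Fin n) ℂ) = (h : GL (Fin n) ℂ) := by
      rw [hw] at this
      exact mul_inv_eq_one.1 this
    exact Subtype.ext this
  exact Finite.of_injective Φ hinj
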